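/- For every m ≥ 1, let γ_m(n) be the number of Dyck paths of semilength n whose mex is m, and let Γ_m(X) = Σ_{n≥0} γ_m(n) X^n ∈ ℤ⟦X⟧. Then Γ_m(X) is rational in X and C(X): there exist two-variable polynomials P, Q with integer coefficients such that Q(X, C(X)) is a nonzero power series and Q(X, C(X)) · Γ_m(X) = P(X, C(X)) in ℤ⟦X⟧. -/

import Mathlib

open DyckStep

/-- A Dyck word `p` has a peak at height `h`: an up-step immediately followed by a
down-step, such that the prefix ending with that up-step has `h` more `U`s than `D`s. -/
def DyckWord.HasPeakAtHeight (p : DyckWord) (h : ℕ) : Prop :=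
  ∃ i, i + 1 < p.toList.length ∧ p.toList.getD i D = U ∧ p.toList.getD (i + 1) U = D ∧
    (p.toList.take (i + 1)).count U = (p.toList.take (i + 1)).count D + h

/-- The mex of a Dyck word: the smallest positive integer `m` such that the word has no
peak at height `m`. -/
noncomputable def DyckWord.mex (p : DyckWord) : ℕ :=
  sInf {m : ℕ | 0 < m ∧ ¬ p.HasPeakAtHeight m}

/-- The generating function of the Catalan numbers, `C(X) = Σ_{n≥0} catalan(n) Xⁿ`. -/
noncomputable def catalanGF : PowerSeries ℤ :=
  PowerSeries.mk fun n => (catalan n : ℤ)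


namespace DyckWordMex

open DyckWord List

lemma hasPeak_iff (p : DyckWord) (h : ℕ) :
    p.HasPeakAtHeight h ↔ ∃ A B : List DyckStep,
      p.toList = A ++ U :: D :: B ∧ A.count U + 1 = A.count D + h := by
  constructor
  · rintro ⟨i, hlen, hU, hD, hcnt⟩
    have hi : i < p.toList.length := by omega
    rw [List.getD_eq_getElem _ _ hi] at hU
    rw [List.getD_eq_getElem _ _ hlen] at hD
    refine ⟨p.toList.take i, p.toList.drop (i + 2), ?_, ?_⟩
    · conv_lhs => rw [← List.take_append_drop i p.toList]
      rw [List.drop_eq_getElem_cons hi, hU, List.drop_eq_getElem_cons hlen, hD]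
    · rw [List.take_succ, List.getElem?_eq_getElem hi, hU] at hcnt
      simp [List.count_append, List.count_cons] at hcnt
      all_goals omega
  · rintro ⟨A, B, hp, hcnt⟩
    have hlen : A.length + 1 < (A ++ U :: D :: B).length := by
      simp [List.length_append]
      all_goals omega
    refine ⟨A.length, by rw [hp]; exact hlen, ?_, ?_, ?_⟩
    · rw [hp, List.getD_eq_getElem _ _ (by omega)]
      rw [List.getElem_append_right (le_refl A.length)]
      simp
    · rw [hp, List.getD_eq_getElem _ _ hlen]
      rw [List.getElem_append_right (by omega)]
      simp
    · rw [hp, List.take_append, List.take_of_length_le (by omega)]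
      simp [List.count_append, List.count_cons]
      omega

end DyckWordMex

namespace DyckWordMex2
open DyckWord List DyckWordMex

lemma not_hasPeak_zero (p : DyckWord) : ¬ p.HasPeakAtHeight 0 := by
  rw [hasPeak_iff]
  rintro ⟨A, B, hp, hc⟩
  have := p.count_D_le_count_U A.length
  rw [hp, List.take_left] at this
  omega

lemma hasPeak_pos {p : DyckWord} {h : ℕ} (hp : p.HasPeakAtHeight h) : 1 ≤ h := by
  rcases Nat.eq_zero_or_pos h with h0 | h1
  · exact absurd (h0 ▸ hp) (not_hasPeak_zero p)
  · exact h1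

lemma toList_add (p q : DyckWord) : (p + q).toList = p.toList ++ q.toList := rfl

lemma toList_nest (p : DyckWord) : p.nest.toList = U :: (p.toList ++ [D]) := rfl

lemma toList_nest_add (q r : DyckWord) :
    (q.nest + r).toList = U :: (q.toList ++ D :: r.toList) := by
  rw [toList_add, toList_nest]; simp

lemma hasPeak_nest_add (q r : DyckWord) (h : ℕ) :
    (q.nest + r).HasPeakAtHeight h ↔
      (h = 1 ∧ q = 0) ∨ q.HasPeakAtHeight (h - 1) ∨ r.HasPeakAtHeight h := by
  have hqc := q.count_U_eq_count_D
  simp only [hasPeak_iff]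
  constructor
  · rintro ⟨A, B, hp, hc⟩
    rw [toList_nest_add] at hp
    cases A with
    | nil =>
      simp only [List.nil_append] at hp
      injection hp with h1 h2
      cases hq : q.toList with
      | nil =>
        left
        simp only [List.count_nil] at hc
        exact ⟨by omega, DyckWord.toList_eq_nil.mp hq⟩
      | cons s t =>
        exfalso
        have hne : q ≠ 0 := by
          rw [← DyckWord.toList_ne_nil, hq]; simp
        rw [hq, List.cons_append] at h2
        injection h2 with h3 h4
        have h5 := q.count_D_le_count_U 1
        rw [hq] at h5
        simp [h3] at h5
    | cons a A' =>
      rw [List.cons_append] at hp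
      injection hp with ha hp'
      rcases List.append_eq_append_iff.mp hp' with ⟨a', h1, h2⟩ | ⟨c', h1, h2⟩
      · cases a' with
        | nil => simp at h2
        | cons y a'' =>
          rw [List.cons_append] at h2
          injection h2 with hy h2'
          refine Or.inr (Or.inr ⟨a'', B, h2', ?_⟩)
          subst h1
          rw [← ha] at hc
          rw [← hy] at hc
          simp [List.count_cons, List.count_append] at hc
          omega
      · cases c' with
        | nil =>
          rw [List.nil_append] at h2
          injection h2 with hbad
          exact absurd hbad (by simp)
        | cons x c'' =>
          rw [List.cons_append] at h2
          injection h2 with hx h2'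
          cases c'' with
          | nil =>
            exfalso
            have hpre := q.count_D_le_count_U A'.length
            rw [h1, List.take_left] at hpre
            have hq2 := hqc
            rw [h1, ← hx] at hq2
            simp [List.count_append, List.count_cons] at hq2
            omega
          | cons z c''' =>
            rw [List.cons_append] at h2'
            injection h2' with hz h2''
            have hpre := q.count_D_le_count_U A'.length
            rw [h1, List.take_left] at hpre
            refine Or.inr (Or.inl ⟨A', c''', ?_, ?_⟩)
            · rw [h1, ← hx, ← hz]
            · rw [← ha] at hc
              simp [List.count_cons] at hc
              omega
  · rintro (⟨h1, hq0⟩ | ⟨A, B, hq, hc⟩ | ⟨A, B, hr, hc⟩)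
    · refine ⟨[], r.toList, ?_, by simp [h1]⟩
      rw [toList_nest_add, hq0]
      rfl
    · have h2 : 2 ≤ h := by
        have := hasPeak_pos (p := q) (h := h - 1) (by rw [hasPeak_iff]; exact ⟨A, B, hq, hc⟩)
        omega
      refine ⟨U :: A, B ++ D :: r.toList, ?_, ?_⟩
      · rw [toList_nest_add, hq]
        simp
      · simp only [List.count_cons, List.count_nil]
        simp
        omega
    · refine ⟨U :: (q.toList ++ D :: A), B, ?_, ?_⟩
      · rw [toList_nest_add, hr]
        simp
      · simp only [List.count_cons, List.count_append]
        simp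
        omega

end DyckWordMex2

namespace Step3
open DyckWord List DyckWordMex DyckWordMex2 Finset

def Avoid (S : Finset ℕ) (p : DyckWord) : Prop := ∀ h ∈ S, ¬ p.HasPeakAtHeight h

def dn (S : Finset ℕ) : Finset ℕ := (S.erase 1).image (· - 1)

lemma avoid_zero (S : Finset ℕ) : Avoid S 0 := by
  rintro h _ ⟨i, hi, -⟩
  simp only [show (0 : DyckWord).toList = [] from rfl, List.length_nil] at hi
  omega

lemma semilength_eq_zero {p : DyckWord} : p.semilength = 0 ↔ p = 0 := by
  constructor
  · intro hs
    have := p.two_mul_semilength_eq_length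
    rw [hs] at this
    rw [← DyckWord.toList_eq_nil, ← List.length_eq_zero_iff]
    omega
  · rintro rfl; rfl

lemma avoid_nest_add {S : Finset ℕ} (hS : ∀ s ∈ S, 1 ≤ s) (q r : DyckWord) :
    Avoid S (q.nest + r) ↔ Avoid (dn S) q ∧ (1 ∈ S → q ≠ 0) ∧ Avoid S r := by
  constructor
  · intro hA
    refine ⟨?_, ?_, ?_⟩
    · intro k hk pk
      obtain ⟨h, hh, rfl⟩ := Finset.mem_image.mp hk
      obtain ⟨hne1, hhS⟩ := Finset.mem_erase.mp hh
      exact hA h hhS ((hasPeak_nest_add q r h).mpr (Or.inr (Or.inl pk)))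
    · intro h1 hq0
      exact hA 1 h1 ((hasPeak_nest_add q r 1).mpr (Or.inl ⟨rfl, hq0⟩))
    · intro h hh pk
      exact hA h hh ((hasPeak_nest_add q r h).mpr (Or.inr (Or.inr pk)))
  · rintro ⟨h1, h2, h3⟩ h hh pk
    rcases (hasPeak_nest_add q r h).mp pk with ⟨he, hq0⟩ | qpk | rpk
    · exact h2 (he ▸ hh) hq0
    · have hge : 1 ≤ h - 1 := hasPeak_pos qpk
      have hhm : h - 1 ∈ dn S := by
        refine Finset.mem_image.mpr ⟨h, Finset.mem_erase.mpr ⟨by omega, hh⟩, rfl⟩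
      exact h1 _ hhm qpk
    · exact h3 h hh rpk

noncomputable def aCount (S : Finset ℕ) (n : ℕ) : ℕ :=
  Nat.card {p : DyckWord // p.semilength = n ∧ Avoid S p}

noncomputable def bCount (S : Finset ℕ) (n : ℕ) : ℕ :=
  Nat.card {p : DyckWord // p.semilength = n ∧ (Avoid (dn S) p ∧ (1 ∈ S → p ≠ 0))}

lemma finite_aux (n : ℕ) (Q : DyckWord → Prop) :
    Finite {p : DyckWord // p.semilength = n ∧ Q p} := by
  refine Finite.of_injective
    (fun x : {p : DyckWord // p.semilength = n ∧ Q p} =>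
      (⟨x.1, x.2.1⟩ : {p : DyckWord // p.semilength = n})) ?_
  intro a b hab
  exact Subtype.ext (congrArg (fun y : {p : DyckWord // p.semilength = n} => y.1) hab)

lemma aCount_zero (S : Finset ℕ) : aCount S 0 = 1 := by
  rw [aCount]
  haveI : Unique {p : DyckWord // p.semilength = 0 ∧ Avoid S p} :=
    { default := ⟨0, rfl, avoid_zero S⟩
      uniq := fun x => Subtype.ext (semilength_eq_zero.mp x.2.1) }
  exact Nat.card_unique

lemma card_filter_eq_natCard (n : ℕ) (Q : DyckWord → Prop) [DecidablePred fun p : {p : DyckWord // p.semilength = n} => Q p.1] :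
    (Finset.univ.filter (fun p : {p : DyckWord // p.semilength = n} => Q p.1)).card
      = Nat.card {p : DyckWord // p.semilength = n ∧ Q p} := by
  rw [← Fintype.card_subtype]
  rw [← Nat.card_eq_fintype_card]
  exact Nat.card_congr (Equiv.subtypeSubtypeEquivSubtypeInter _ _)

end Step3

namespace Step4
open DyckWord List DyckWordMex DyckWordMex2 Step3 Finset

lemma ne_zero_of_semilength_succ {p : DyckWord} {n : ℕ} (hp : p.semilength = n + 1) :
    p ≠ 0 := by
  intro e
  rw [e] at hp
  simp at hp

noncomputable def fiberEquiv (S : Finset ℕ) (hS : ∀ s ∈ S, 1 ≤ s) (n i : ℕ) (hi : i ≤ n) :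
    {p : DyckWord // p.semilength = n + 1 ∧ (Avoid S p ∧ p.insidePart.semilength = i)} ≃
      {q : DyckWord // q.semilength = i ∧ (Avoid (dn S) q ∧ (1 ∈ S → q ≠ 0))} ×
      {r : DyckWord // r.semilength = n - i ∧ Avoid S r} where
  toFun x :=
    have hp : x.1.semilength = n + 1 := x.2.1
    have hne : x.1 ≠ 0 := ne_zero_of_semilength_succ hp
    have hsum : x.1.insidePart.semilength + x.1.outsidePart.semilength + 1 = x.1.semilength :=
      DyckWord.semilength_insidePart_add_semilength_outsidePart_add_one hne
    have hav : Avoid (dn S) x.1.insidePart ∧ (1 ∈ S → x.1.insidePart ≠ 0) ∧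
        Avoid S x.1.outsidePart := by
      rw [← avoid_nest_add hS, DyckWord.nest_insidePart_add_outsidePart hne]
      exact x.2.2.1
    (⟨x.1.insidePart, x.2.2.2, hav.1, hav.2.1⟩,
     ⟨x.1.outsidePart, by have := x.2.2.2; omega, hav.2.2⟩)
  invFun y :=
    ⟨y.1.1.nest + y.2.1, by
      rw [DyckWord.semilength_add, DyckWord.semilength_nest, y.1.2.1, y.2.2.1]
      omega, by
      refine ⟨(avoid_nest_add hS _ _).mpr ⟨y.1.2.2.1, y.1.2.2.2, y.2.2.2⟩, ?_⟩
      rw [DyckWord.insidePart_add DyckWord.nest_ne_zero, DyckWord.insidePart_nest]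
      exact y.1.2.1⟩
  left_inv x := by
    have hne : x.1 ≠ 0 := ne_zero_of_semilength_succ x.2.1
    exact Subtype.ext (DyckWord.nest_insidePart_add_outsidePart hne)
  right_inv y := by
    refine Prod.ext (Subtype.ext ?_) (Subtype.ext ?_)
    · show (y.1.1.nest + y.2.1).insidePart = y.1.1
      rw [DyckWord.insidePart_add DyckWord.nest_ne_zero, DyckWord.insidePart_nest]
    · show (y.1.1.nest + y.2.1).outsidePart = y.2.1
      rw [DyckWord.outsidePart_add DyckWord.nest_ne_zero, DyckWord.outsidePart_nest, zero_add]

lemma count_rec (S : Finset ℕ) (hS : ∀ s ∈ S, 1 ≤ s) (n : ℕ) :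
    aCount S (n + 1) = ∑ i ∈ Finset.range (n + 1), bCount S i * aCount S (n - i) := by
  classical
  rw [aCount, ← card_filter_eq_natCard (n + 1) (Avoid S)]
  rw [Finset.card_eq_sum_card_fiberwise
    (f := fun p : {p : DyckWord // p.semilength = n + 1} => p.1.insidePart.semilength)
    (t := Finset.range (n + 1)) ?_]
  · refine Finset.sum_congr rfl fun i hi => ?_
    have hin : i ≤ n := by simpa using Nat.lt_succ_iff.mp (Finset.mem_range.mp hi)
    rw [Finset.filter_filter]
    rw [card_filter_eq_natCard (n + 1) (fun p => Avoid S p ∧ p.insidePart.semilength = i)]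
    rw [Nat.card_congr (fiberEquiv S hS n i hin), Nat.card_prod]
    rfl
  · intro x hx
    have hne : x.1 ≠ 0 := ne_zero_of_semilength_succ x.2
    have := DyckWord.semilength_insidePart_lt hne
    rw [Finset.mem_coe, Finset.mem_range]
    show (x.1).insidePart.semilength < n + 1
    omega

end Step4

namespace Step5
open Step3 Step4 PowerSeries

noncomputable def Aser (S : Finset ℕ) : PowerSeries ℤ :=
  PowerSeries.mk fun n => (aCount S n : ℤ)

noncomputable def Bser (S : Finset ℕ) : PowerSeries ℤ :=
  PowerSeries.mk fun n => (bCount S n : ℤ)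

lemma Aser_eq (S : Finset ℕ) (hS : ∀ s ∈ S, 1 ≤ s) :
    Aser S = 1 + X * (Bser S * Aser S) := by
  apply PowerSeries.ext
  intro n
  rcases n with _ | n
  · simp [Aser, aCount_zero, PowerSeries.coeff_zero_eq_constantCoeff, map_add, map_mul,
      PowerSeries.constantCoeff_X]
  · rw [map_add, PowerSeries.coeff_succ_X_mul, PowerSeries.coeff_mul]
    have h1 : (PowerSeries.coeff (n + 1)) (1 : PowerSeries ℤ) = 0 := by
      simp [PowerSeries.coeff_one]
    rw [h1, zero_add, Aser, PowerSeries.coeff_mk]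
    rw [Finset.Nat.sum_antidiagonal_eq_sum_range_succ_mk]
    rw [count_rec S hS n]
    push_cast
    refine Finset.sum_congr rfl fun i hi => ?_
    simp [Aser, Bser, PowerSeries.coeff_mk]

lemma Bser_eq (S : Finset ℕ) :
    Bser S = Aser (dn S) - (if 1 ∈ S then 1 else 0) := by
  apply PowerSeries.ext
  intro n
  rw [map_sub]
  by_cases h1 : 1 ∈ S
  · simp only [h1, if_true]
    rcases n with _ | n
    · have hz : bCount S 0 = 0 := by
        rw [bCount]
        haveI : IsEmpty {p : DyckWord // p.semilength = 0 ∧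
            (Avoid (dn S) p ∧ (1 ∈ S → p ≠ 0))} :=
          ⟨fun x => x.2.2.2 h1 (semilength_eq_zero.mp x.2.1)⟩
        exact Nat.card_of_isEmpty
      simp [Aser, Bser, hz, aCount_zero, PowerSeries.coeff_zero_eq_constantCoeff]
    · have he : bCount S (n + 1) = aCount (dn S) (n + 1) := by
        rw [bCount, aCount]
        apply Nat.card_congr
        apply Equiv.subtypeEquivRight
        intro p
        constructor
        · rintro ⟨hsl, hav, -⟩; exact ⟨hsl, hav⟩
        · rintro ⟨hsl, hav⟩; exact ⟨hsl, hav, fun _ => ne_zero_of_semilength_succ hsl⟩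
      simp [Aser, Bser, he, PowerSeries.coeff_one]
  · have he : ∀ k, bCount S k = aCount (dn S) k := by
      intro k
      rw [bCount, aCount]
      apply Nat.card_congr
      apply Equiv.subtypeEquivRight
      intro p
      simp [h1]
    simp [Aser, Bser, he, h1]

lemma Aser_empty : Aser ∅ = catalanGF := by
  apply PowerSeries.ext
  intro n
  rw [Aser, catalanGF, PowerSeries.coeff_mk, PowerSeries.coeff_mk]
  congr 1
  rw [aCount]
  have e1 : Nat.card {p : DyckWord // p.semilength = n ∧ Avoid ∅ p}
      = Nat.card {p : DyckWord // p.semilength = n} := by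
    apply Nat.card_congr
    apply Equiv.subtypeEquivRight
    intro p
    simp [Avoid]
  rw [e1, Nat.card_eq_fintype_card, DyckWord.card_dyckWord_semilength_eq_catalan]

end Step5

namespace Step6
open Step3 Step4 Step5 PowerSeries

noncomputable def v : Fin 2 → PowerSeries ℤ := ![PowerSeries.X, catalanGF]

def Rat2 (f : PowerSeries ℤ) : Prop :=
  ∃ P Q : MvPolynomial (Fin 2) ℤ,
    MvPolynomial.aeval v Q ≠ 0 ∧ MvPolynomial.aeval v Q * f = MvPolynomial.aeval v P

lemma rat_aeval (P : MvPolynomial (Fin 2) ℤ) : Rat2 (MvPolynomial.aeval v P) :=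
  ⟨P, 1, by simp, by simp⟩

lemma rat_catalanGF : Rat2 catalanGF := by
  have h := rat_aeval (MvPolynomial.X 1)
  rwa [MvPolynomial.aeval_X, show v 1 = catalanGF from rfl] at h

lemma rat_one : Rat2 1 := by
  have h := rat_aeval 1
  rwa [map_one] at h

lemma rat_zero : Rat2 0 := by
  have h := rat_aeval 0
  rwa [map_zero] at h

lemma rat_add {f g : PowerSeries ℤ} (hf : Rat2 f) (hg : Rat2 g) : Rat2 (f + g) := by
  obtain ⟨Pf, Qf, hQf, hef⟩ := hf
  obtain ⟨Pg, Qg, hQg, heg⟩ := hg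
  refine ⟨Pf * Qg + Pg * Qf, Qf * Qg, ?_, ?_⟩
  · rw [map_mul]; exact mul_ne_zero hQf hQg
  · rw [map_mul, map_add, map_mul, map_mul]
    linear_combination (MvPolynomial.aeval v Qg) * hef + (MvPolynomial.aeval v Qf) * heg

lemma rat_neg {f : PowerSeries ℤ} (hf : Rat2 f) : Rat2 (-f) := by
  obtain ⟨Pf, Qf, hQf, hef⟩ := hf
  exact ⟨-Pf, Qf, hQf, by rw [map_neg]; linear_combination -hef⟩

lemma rat_sub {f g : PowerSeries ℤ} (hf : Rat2 f) (hg : Rat2 g) : Rat2 (f - g) := by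
  rw [sub_eq_add_neg]; exact rat_add hf (rat_neg hg)

lemma rat_mul {f g : PowerSeries ℤ} (hf : Rat2 f) (hg : Rat2 g) : Rat2 (f * g) := by
  obtain ⟨Pf, Qf, hQf, hef⟩ := hf
  obtain ⟨Pg, Qg, hQg, heg⟩ := hg
  refine ⟨Pf * Pg, Qf * Qg, ?_, ?_⟩
  · rw [map_mul]; exact mul_ne_zero hQf hQg
  · rw [map_mul, map_mul]
    linear_combination (MvPolynomial.aeval v Qg * g) * hef + (MvPolynomial.aeval v Pf) * heg

lemma rat_smul (z : ℤ) {f : PowerSeries ℤ} (hf : Rat2 f) : Rat2 (z • f) := by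
  have hz : (z • f) = MvPolynomial.aeval v (MvPolynomial.C z) * f := by
    rw [MvPolynomial.aeval_C]
    exact Algebra.smul_def z f
  rw [hz]
  exact rat_mul (by have := rat_aeval (MvPolynomial.C z); exact this) hf

lemma rat_solve {B f : PowerSeries ℤ} (hB : Rat2 B) (hf : f = 1 + X * (B * f)) :
    Rat2 f := by
  obtain ⟨PB, QB, hQB, heB⟩ := hB
  refine ⟨QB, QB - MvPolynomial.X 0 * PB, ?_, ?_⟩
  · rw [map_sub, map_mul, MvPolynomial.aeval_X, show v 0 = PowerSeries.X from rfl]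
    intro h0
    have h1 : MvPolynomial.aeval v QB * (1 - X * B) = 0 := by
      linear_combination h0 - X * heB
    rcases mul_eq_zero.mp h1 with h2 | h2
    · exact hQB h2
    · have h3 := congrArg (PowerSeries.constantCoeff) h2
      simp [map_sub, map_mul, PowerSeries.constantCoeff_X] at h3
  · rw [map_sub, map_mul, MvPolynomial.aeval_X, show v 0 = PowerSeries.X from rfl]
    linear_combination (MvPolynomial.aeval v QB) * hf + (X * f) * heB

lemma rat_Aser_aux : ∀ N : ℕ, ∀ S : Finset ℕ, (∀ s ∈ S, 1 ≤ s) → S.sup id ≤ N →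
    Rat2 (Aser S) := by
  intro N
  induction N with
  | zero =>
    intro S hS hsup
    have hSe : S = ∅ := by
      rw [Finset.eq_empty_iff_forall_notMem]
      intro s hs
      have h1 := hS s hs
      have h2 : id s ≤ S.sup id := Finset.le_sup hs
      simp only [id] at h2
      omega
    rw [hSe, Aser_empty]
    exact rat_catalanGF
  | succ N ih =>
    intro S hS hsup
    by_cases hSe : S = ∅
    · rw [hSe, Aser_empty]; exact rat_catalanGF
    · have hd : ∀ s ∈ dn S, 1 ≤ s := by
        intro s hs
        obtain ⟨h, hh, rfl⟩ := Finset.mem_image.mp hs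
        obtain ⟨h1, h2⟩ := Finset.mem_erase.mp hh
        have := hS h h2
        omega
      have hdsup : (dn S).sup id ≤ N := by
        apply Finset.sup_le
        intro k hk
        obtain ⟨h, hh, rfl⟩ := Finset.mem_image.mp hk
        obtain ⟨h1, h2⟩ := Finset.mem_erase.mp hh
        have h3 : id h ≤ S.sup id := Finset.le_sup h2
        simp only [id] at h3 ⊢
        omega
      have hBd := ih (dn S) hd hdsup
      have hB : Rat2 (Bser S) := by
        rw [Bser_eq]
        split_ifs with h1
        · exact rat_sub hBd rat_one
        · exact rat_sub hBd rat_zero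
      exact rat_solve hB (Aser_eq S hS)

end Step6

namespace Step7
open Step3 Step4 Step5 Step6 Finset
open scoped Classical

lemma mex_eq_iff {p : DyckWord} {m : ℕ} (hm : 1 ≤ m) :
    p.mex = m ↔ (∀ k, 1 ≤ k → k < m → p.HasPeakAtHeight k) ∧ ¬ p.HasPeakAtHeight m := by
  rw [DyckWord.mex]
  constructor
  · intro h
    have hne : {k : ℕ | 0 < k ∧ ¬ p.HasPeakAtHeight k}.Nonempty := by
      by_contra hc
      rw [Set.not_nonempty_iff_eq_empty] at hc
      rw [hc, Nat.sInf_empty] at h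
      omega
    have hmem := Nat.sInf_mem hne
    rw [h] at hmem
    refine ⟨?_, hmem.2⟩
    intro k hk1 hkm
    by_contra hpk
    have hks : k ∈ {k : ℕ | 0 < k ∧ ¬ p.HasPeakAtHeight k} := ⟨hk1, hpk⟩
    have := Nat.sInf_le hks
    omega
  · rintro ⟨hall, hnm⟩
    have hmem : m ∈ {k : ℕ | 0 < k ∧ ¬ p.HasPeakAtHeight k} := ⟨hm, hnm⟩
    apply le_antisymm
    · exact Nat.sInf_le hmem
    · by_contra hlt
      push_neg at hlt
      have h2 := Nat.sInf_mem (⟨m, hmem⟩ : Set.Nonempty _)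
      exact h2.2 (hall _ h2.1 hlt)

variable {m : ℕ}

lemma mex_eq_iff_cp (hm : 1 ≤ m) (p : DyckWord) :
    p.mex = m ↔
      (Finset.Icc 1 m).filter (fun h => p.HasPeakAtHeight h) = Finset.Icc 1 (m - 1) := by
  rw [mex_eq_iff hm]
  constructor
  · rintro ⟨hall, hnm⟩
    ext x
    rw [Finset.mem_filter, Finset.mem_Icc, Finset.mem_Icc]
    constructor
    · rintro ⟨⟨h1, h2⟩, hpk⟩
      have hxm : x ≠ m := fun e => hnm (e ▸ hpk)
      omega
    · rintro ⟨h1, h2⟩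
      exact ⟨⟨h1, by omega⟩, hall x h1 (by omega)⟩
  · intro hcp
    constructor
    · intro k hk1 hkm
      have : k ∈ (Finset.Icc 1 m).filter (fun h => p.HasPeakAtHeight h) := by
        rw [hcp, Finset.mem_Icc]
        omega
      exact (Finset.mem_filter.mp this).2
    · intro hpk
      have : m ∈ (Finset.Icc 1 m).filter (fun h => p.HasPeakAtHeight h) :=
        Finset.mem_filter.mpr ⟨Finset.mem_Icc.mpr ⟨hm, le_refl m⟩, hpk⟩
      rw [hcp, Finset.mem_Icc] at this
      omega

lemma key_sum (hm : 1 ≤ m) (p : DyckWord) :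
    ∑ U ∈ (Finset.Icc 1 (m - 1)).powerset,
      (-1 : ℤ) ^ ((Finset.Icc 1 (m - 1)) \ U).card *
        (if Avoid ((Finset.Icc 1 m) \ U) p then 1 else 0)
      = (if p.mex = m then 1 else 0) := by
  classical
  set V := Finset.Icc 1 (m - 1) with hV
  set W := Finset.Icc 1 m with hW
  set cp := W.filter (fun h => p.HasPeakAtHeight h) with hcp
  have hcpW : cp ⊆ W := Finset.filter_subset _ _
  have hAv : ∀ U : Finset ℕ, Avoid (W \ U) p ↔ cp ⊆ U := by
    intro U
    constructor
    · intro hA x hx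
      rw [hcp, Finset.mem_filter] at hx
      by_contra hxU
      exact hA x (Finset.mem_sdiff.mpr ⟨hx.1, hxU⟩) hx.2
    · intro hsub h hh pk
      rw [Finset.mem_sdiff] at hh
      exact hh.2 (hsub (Finset.mem_filter.mpr ⟨hh.1, pk⟩))
  have hmexcp : p.mex = m ↔ cp = V := mex_eq_iff_cp hm p
  have hre : ∑ U ∈ V.powerset, (-1 : ℤ) ^ ((V \ U).card) * (if Avoid (W \ U) p then 1 else 0)
      = ∑ T ∈ V.powerset, (-1 : ℤ) ^ (T.card) * (if cp ⊆ V \ T then 1 else 0) := by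
    refine Finset.sum_nbij' (i := fun U => V \ U) (j := fun T => V \ T) ?_ ?_ ?_ ?_ ?_
    · intro U hU
      exact Finset.mem_powerset.mpr (Finset.sdiff_subset)
    · intro T hT
      exact Finset.mem_powerset.mpr (Finset.sdiff_subset)
    · intro U hU
      exact Finset.sdiff_sdiff_eq_self (Finset.mem_powerset.mp hU)
    · intro T hT
      exact Finset.sdiff_sdiff_eq_self (Finset.mem_powerset.mp hT)
    · intro U hU
      rw [hAv U]
      simp [Finset.sdiff_sdiff_eq_self (Finset.mem_powerset.mp hU)]
  rw [hre]
  by_cases hcpV : cp ⊆ V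
  · have step1 : ∀ T ∈ V.powerset,
        (-1 : ℤ) ^ (T.card) * (if cp ⊆ V \ T then 1 else 0)
          = (-1 : ℤ) ^ (T.card) * (if T ⊆ V \ cp then 1 else 0) := by
      intro T hT
      congr 1
      have : (cp ⊆ V \ T) ↔ (T ⊆ V \ cp) := by
        rw [Finset.subset_sdiff, Finset.subset_sdiff]
        constructor
        · rintro ⟨h1, h2⟩; exact ⟨Finset.mem_powerset.mp hT, h2.symm⟩
        · rintro ⟨h1, h2⟩; exact ⟨hcpV, h2.symm⟩
      simp only [this]
    rw [Finset.sum_congr rfl step1]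
    have hvan : ∀ T ∈ V.powerset, T ∉ (V \ cp).powerset →
        (-1 : ℤ) ^ (T.card) * (if T ⊆ V \ cp then 1 else 0) = 0 := by
      intro T hT hT2
      rw [Finset.mem_powerset] at hT2
      simp [hT2]
    rw [← Finset.sum_subset (Finset.powerset_mono.mpr Finset.sdiff_subset) hvan]
    have step2 : ∀ T ∈ (V \ cp).powerset,
        (-1 : ℤ) ^ (T.card) * (if T ⊆ V \ cp then 1 else 0) = (-1 : ℤ) ^ (T.card) := by
      intro T hT
      rw [Finset.mem_powerset] at hT
      simp [hT]
    rw [Finset.sum_congr rfl step2, Finset.sum_powerset_neg_one_pow_card]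
    have : (V \ cp = ∅) ↔ (p.mex = m) := by
      rw [Finset.sdiff_eq_empty_iff_subset, hmexcp]
      exact ⟨fun h => le_antisymm hcpV h, fun h => h ▸ le_refl _⟩
    by_cases hh : p.mex = m
    · simp [hh, this.mpr hh]
    · have : ¬ (V \ cp = ∅) := fun e => hh (this.mp e)
      simp [hh, this]
  · have hz : ∀ T ∈ V.powerset, (-1 : ℤ) ^ (T.card) * (if cp ⊆ V \ T then 1 else 0) = 0 := by
      intro T hT
      have : ¬ (cp ⊆ V \ T) := fun h => hcpV (h.trans Finset.sdiff_subset)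
      simp [this]
    rw [Finset.sum_congr rfl hz]
    have : ¬ (p.mex = m) := fun h => hcpV (hmexcp.mp h ▸ le_refl _)
    simp [this]

end Step7

namespace Step8
open Step3 Step4 Step5 Step6 Step7 Finset PowerSeries
open scoped Classical

variable {m : ℕ}

lemma gamma_coeff (hm : 1 ≤ m) (n : ℕ) :
    ((Nat.card {p : DyckWord // p.semilength = n ∧ p.mex = m} : ℤ))
      = ∑ U ∈ (Finset.Icc 1 (m - 1)).powerset,
          (-1 : ℤ) ^ ((Finset.Icc 1 (m - 1)) \ U).card
            * (aCount ((Finset.Icc 1 m) \ U) n : ℤ) := by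
  have hA : ∀ U : Finset ℕ, (aCount ((Finset.Icc 1 m) \ U) n : ℤ)
      = ∑ p ∈ (Finset.univ : Finset {p : DyckWord // p.semilength = n}),
          (if Avoid ((Finset.Icc 1 m) \ U) p.1 then 1 else 0) := by
    intro U
    rw [aCount, ← card_filter_eq_natCard n (Avoid ((Finset.Icc 1 m) \ U)),
      Finset.card_filter]
    push_cast
    rfl
  have hstep : ∀ U ∈ (Finset.Icc 1 (m - 1)).powerset,
      (-1 : ℤ) ^ ((Finset.Icc 1 (m - 1)) \ U).card
          * (aCount ((Finset.Icc 1 m) \ U) n : ℤ)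
        = ∑ p ∈ (Finset.univ : Finset {p : DyckWord // p.semilength = n}),
            (-1 : ℤ) ^ ((Finset.Icc 1 (m - 1)) \ U).card
              * (if Avoid ((Finset.Icc 1 m) \ U) p.1 then 1 else 0) := by
    intro U _
    rw [hA U, Finset.mul_sum]
  rw [Finset.sum_congr rfl hstep, Finset.sum_comm]
  rw [← card_filter_eq_natCard n (fun p => p.mex = m), Finset.card_filter]
  push_cast
  refine Finset.sum_congr rfl fun p _ => ?_
  rw [key_sum hm p.1]

lemma Gamma_eq (hm : 1 ≤ m) :
    PowerSeries.mk (fun n => (Nat.card {p : DyckWord // p.semilength = n ∧ p.mex = m} : ℤ))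
      = ∑ U ∈ (Finset.Icc 1 (m - 1)).powerset,
          ((-1 : ℤ) ^ ((Finset.Icc 1 (m - 1)) \ U).card) • Aser ((Finset.Icc 1 m) \ U) := by
  apply PowerSeries.ext
  intro n
  rw [PowerSeries.coeff_mk, map_sum, gamma_coeff hm n]
  refine Finset.sum_congr rfl fun U _ => ?_
  erw [PowerSeries.coeff_smul]
  rw [smul_eq_mul, Aser, PowerSeries.coeff_mk]

theorem main (hm : 1 ≤ m) :
    ∃ P Q : MvPolynomial (Fin 2) ℤ,
      MvPolynomial.aeval ![PowerSeries.X, catalanGF] Q ≠ 0 ∧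
      MvPolynomial.aeval ![PowerSeries.X, catalanGF] Q *
          PowerSeries.mk
            (fun n => (Nat.card {p : DyckWord // p.semilength = n ∧ p.mex = m} : ℤ)) =
        MvPolynomial.aeval ![PowerSeries.X, catalanGF] P := by
  have hrat : Rat2 (PowerSeries.mk
      (fun n => (Nat.card {p : DyckWord // p.semilength = n ∧ p.mex = m} : ℤ))) := by
    rw [Gamma_eq hm]
    refine Finset.sum_induction _ Rat2 (fun a b ha hb => rat_add ha hb) rat_zero ?_
    intro U hU
    apply rat_smul
    refine rat_Aser_aux (((Finset.Icc 1 m) \ U).sup id) _ ?_ le_rfl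
    intro s hs
    have h1 := (Finset.mem_sdiff.mp hs).1
    rw [Finset.mem_Icc] at h1
    omega
  obtain ⟨P, Q, h1, h2⟩ := hrat
  exact ⟨P, Q, h1, h2⟩

end Step8


/-- for every `m ≥ 1`, the generating function of Dyck paths (by
semilength) with mex `m` is rational in `X` and `C(X)`: there are two-variable integer
polynomials `P, Q` with `Q(X, C(X)) ≠ 0` and
`Q(X, C(X)) · Γ_m(X) = P(X, C(X))` in `ℤ⟦X⟧`. -/
theorem stmt_14 (m : ℕ) (hm : 1 ≤ m) :
    ∃ P Q : MvPolynomial (Fin 2) ℤ,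
      MvPolynomial.aeval ![PowerSeries.X, catalanGF] Q ≠ 0 ∧
      MvPolynomial.aeval ![PowerSeries.X, catalanGF] Q *
          PowerSeries.mk
            (fun n => (Nat.card {p : DyckWord // p.semilength = n ∧ p.mex = m} : ℤ)) =
        MvPolynomial.aeval ![PowerSeries.X, catalanGF] P := by
  exact Step8.main hm
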